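/- Let (A,≻,≺) be an anti-dendriform algebra and Δ_≻, Δ_≺: A → A⊗A defined by Δ_≻(x) = -(R_≺(x)⊗I + I⊗L_·(x))r_≻ and Δ_≺(x) = (R_·(x)⊗I + I⊗L_≻(x))r_≺ for r_≻, r_≺ ∈ A⊗A. Then the compatibility condition Δ_≺(x·y) = (R_·(y)⊗I)Δ_≺(x) - (I⊗L_≻(x))Δ_≺(y) holds automatically for all x,y ∈ A. -/
import Mathlib


open scoped TensorProduct

/-- An anti-dendriform algebra structure given by bundled bilinear operations
`s` (≻) and `p` (≺). -/
def IsADAlgL (k : Type*) [Field k] {A : Type*} [AddCommGroup A] [Module k A]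
    (s p : A →ₗ[k] A →ₗ[k] A) : Prop :=
  (∀ x y z, s x (s y z) = - s (s x y + p x y) z) ∧
  (∀ x y z, s x (s y z) = - p x (s y z + p y z)) ∧
  (∀ x y z, s x (s y z) = p (p x y) z) ∧
  (∀ x y z, p (s x y) z = s x (p y z))

/-- The linear map `A* → A` associated to `r = ∑ i, a i ⊗ b i`. -/
def Tmap (k : Type*) [Field k] {A : Type*} [AddCommGroup A] [Module k A]
    {ι : Type*} [Fintype ι] (a b : ι → A) (w : Module.Dual k A) : A :=
  ∑ i, w (a i) • b i

/-- The coboundary comultiplication Δ_≻(x) = -(R_≺(x)⊗I + I⊗L_·(x)) r for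
`r = ∑ i, a i ⊗ b i`. -/
noncomputable def Dsucc (k : Type*) [Field k] {A : Type*} [AddCommGroup A] [Module k A]
    {ι : Type*} [Fintype ι] (s p : A →ₗ[k] A →ₗ[k] A) (a b : ι → A) :
    A →ₗ[k] A ⊗[k] A :=
  - ∑ i, (((TensorProduct.mk k A A).flip (b i)) ∘ₗ (p (a i))
      + (TensorProduct.mk k A A (a i)) ∘ₗ ((s + p).flip (b i)))

/-- The coboundary comultiplication Δ_≺(x) = (R_·(x)⊗I + I⊗L_≻(x)) r for
`r = ∑ i, a i ⊗ b i`. -/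
noncomputable def Dprec (k : Type*) [Field k] {A : Type*} [AddCommGroup A] [Module k A]
    {ι : Type*} [Fintype ι] (s p : A →ₗ[k] A →ₗ[k] A) (a b : ι → A) :
    A →ₗ[k] A ⊗[k] A :=
  ∑ i, (((TensorProduct.mk k A A).flip (b i)) ∘ₗ ((s + p) (a i))
      + (TensorProduct.mk k A A (a i)) ∘ₗ (s.flip (b i)))

theorem stmt17 {k A : Type*} [Field k] [AddCommGroup A] [Module k A]
    {ι κ : Type*} [Fintype ι] [Fintype κ]
    (s p : A →ₗ[k] A →ₗ[k] A) (hA : IsADAlgL k s p)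
    (as bs : ι → A) (ap bp : κ → A) :
    -- (D1) holds automatically for Δ_≺ built from r_≺ = ∑ i, ap i ⊗ bp i
    ∀ x y, Dprec k s p ap bp ((s + p) x y)
      = (LinearMap.rTensor A ((s + p).flip y)) (Dprec k s p ap bp x)
        - (LinearMap.lTensor A (s x)) (Dprec k s p ap bp y) := by
  obtain ⟨h1, h2, h3, h4⟩ := hA
  intro x y
  set M := s + p with hM
  have key : ∀ a, M a (M x y) = M (M a x) y := by
    intro a
    have hs' : s a (s x y) = -(s (s a x) y + s (p a x) y) := by
      have := h1 a x y; rwa [map_add, LinearMap.add_apply] at this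
    have hp' : s a (s x y) = -(p a (s x y) + p a (p x y)) := by
      have := h2 a x y; rwa [map_add] at this
    have E1 : p a (s x y) + p a (p x y) = -(s a (s x y)) := by rw [hp', neg_neg]
    have E2 : s (s a x) y + s (p a x) y = -(s a (s x y)) := by rw [hs', neg_neg]
    rw [hM]
    simp only [LinearMap.add_apply, map_add]
    rw [h4 a x y, ← h3 a x y]
    calc s a (s x y) + p a (s x y) + (s a (p x y) + p a (p x y))
        = (p a (s x y) + p a (p x y)) + (s a (s x y) + s a (p x y)) := by abel
      _ = -(s a (s x y)) + (s a (s x y) + s a (p x y)) := by rw [E1]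
      _ = (s (s a x) y + s (p a x) y) + (s a (s x y) + s a (p x y)) := by rw [E2]
      _ = s (s a x) y + s a (p x y) + (s (p a x) y + s a (s x y)) := by abel
  have key2 : ∀ b, s (M x y) b = - s x (s y b) := by
    intro b
    rw [hM]
    simp only [LinearMap.add_apply]
    rw [h1 x y b, neg_neg]
  simp only [Dprec, LinearMap.sum_apply, map_sum, LinearMap.add_apply, map_add,
    LinearMap.coe_comp, Function.comp_apply, TensorProduct.mk_apply,
    LinearMap.flip_apply, ← hM, LinearMap.rTensor_tmul, LinearMap.lTensor_tmul]
  rw [← Finset.sum_sub_distrib]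
  refine Finset.sum_congr rfl fun i _ => ?_
  rw [key, key2]
  simp only [TensorProduct.tmul_neg]
  abel
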